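/- Let Γ and Δ be digraphs of bounded out-degree which are quasi-isometric. Then Γ has isoperimetric number zero if and only if Δ has isoperimetric number zero. -/

import Mathlib

open scoped ENNReal

/-- Existence of a directed path of length `n` from `x` to `y` in the digraph
with edge relation `E`. -/
def PathLen {V : Type*} (E : V → V → Prop) : ℕ → V → V → Prop
  | 0, x, y => x = y
  | n + 1, x, y => ∃ z, E x z ∧ PathLen E n z y

/-- The directed-path semimetric of a digraph, with value `∞` when there is no
directed path. -/
noncomputable def dG {V : Type*} (E : V → V → Prop) (x y : V) : ℝ≥0∞ :=
  sInf {c : ℝ≥0∞ | ∃ n : ℕ, PathLen E n x y ∧ c = (n : ℝ≥0∞)}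

/-- A digraph has bounded out-degree. -/
def BoundedOutDegree {V : Type*} (E : V → V → Prop) : Prop :=
  ∃ k : ℕ, ∀ v : V, {w : V | E v w}.encard ≤ (k : ℕ∞)

/-- Two digraphs are quasi-isometric. -/
def QuasiIsometric {V W : Type*} (EΓ : V → V → Prop) (EΔ : W → W → Prop) : Prop :=
  ∃ l : NNReal, 0 < l ∧ ∃ φ : V → W,
    (∀ x y : V, dG EΓ x y ≤ (l : ℝ≥0∞) * dG EΔ (φ x) (φ y) + l) ∧
    (∀ x y : V, (l : ℝ≥0∞)⁻¹ * dG EΔ (φ x) (φ y) ≤ dG EΓ x y + l) ∧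
    (∀ w : W, ∃ x : V, dG EΔ (φ x) w ≤ (l : ℝ≥0∞) ∧ dG EΔ w (φ x) ≤ (l : ℝ≥0∞))

/-- A digraph has isoperimetric number zero. -/
def IsoperimetricZero {V : Type*} (E : V → V → Prop) : Prop :=
  ∀ ε : ℝ, 0 < ε → ∃ A : Set V, A.Finite ∧ A.Nonempty ∧
    (({x : V | x ∉ A ∧ ∃ y ∈ A, E y x}).ncard : ℝ) < ε * A.ncard

section Basic
variable {V : Type*} {E : V → V → Prop} {x y z : V} {m n : ℕ}

lemma pathLen_trans (h1 : PathLen E m x y) (h2 : PathLen E n y z) :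
    PathLen E (m + n) x z := by
  induction m generalizing x with
  | zero => simpa [PathLen] using h1 ▸ h2
  | succ m ih =>
    obtain ⟨w, hw, hp⟩ := h1
    rw [Nat.succ_add]
    exact ⟨w, hw, ih hp⟩


lemma dG_le_of_pathLen (h : PathLen E n x y) : dG E x y ≤ n :=
  sInf_le ⟨n, h, rfl⟩

lemma dG_self (x : V) : dG E x x = 0 := by
  refine le_antisymm ?_ zero_le
  simpa using dG_le_of_pathLen (E := E) (n := 0) (x := x) (y := x) rfl

lemma exists_pathLen_of_dG_le (h : dG E x y ≤ (n : ℝ≥0∞)) :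
    ∃ m ≤ n, PathLen E m x y := by
  by_contra hc
  push_neg at hc
  have h1 : ((n : ℝ≥0∞) + 1) ≤ dG E x y := by
    refine le_sInf ?_
    rintro c ⟨m, hm, rfl⟩
    have : n + 1 ≤ m := by
      by_contra hmn
      exact hc m (by omega) hm
    exact_mod_cast Nat.cast_le.mpr this |>.trans_eq (by push_cast; ring)
  have h2 : ((n:ℝ≥0∞) + 1) ≤ (n:ℝ≥0∞) := h1.trans h
  have h3 : (n:ℝ≥0∞) < (n:ℝ≥0∞) + 1 :=
    ENNReal.lt_add_right (ENNReal.natCast_ne_top n) one_ne_zero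
  exact absurd (h2.trans_lt h3) (lt_irrefl _)

lemma dG_attained (h : dG E x y ≠ ⊤) : ∃ n, PathLen E n x y ∧ dG E x y = (n : ℝ≥0∞) := by
  have hne : {c : ℝ≥0∞ | ∃ n : ℕ, PathLen E n x y ∧ c = (n : ℝ≥0∞)}.Nonempty := by
    by_contra hc
    rw [Set.not_nonempty_iff_eq_empty] at hc
    exact h (by simp [dG, hc])
  obtain ⟨c, n, hn, rfl⟩ := hne
  classical
  have hN : ∃ n, PathLen E n x y := ⟨n, hn⟩
  refine ⟨Nat.find hN, Nat.find_spec hN, le_antisymm (dG_le_of_pathLen (Nat.find_spec hN)) ?_⟩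
  refine le_sInf ?_
  rintro c ⟨m, hm, rfl⟩
  exact_mod_cast Nat.find_min' hN hm

lemma dG_triangle (x y z : V) : dG E x z ≤ dG E x y + dG E y z := by
  rcases eq_or_ne (dG E x y) ⊤ with h | h
  · simp [h]
  rcases eq_or_ne (dG E y z) ⊤ with h' | h'
  · simp [h']
  obtain ⟨m, hm, hm'⟩ := dG_attained h
  obtain ⟨n, hn, hn'⟩ := dG_attained h'
  rw [hm', hn']
  exact (dG_le_of_pathLen (pathLen_trans hm hn)).trans_eq (by push_cast; ring)

end Basic

def ballS {V : Type*} (E : V → V → Prop) (n : ℕ) (A : Set V) : Set V :=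
  {y | ∃ a ∈ A, ∃ m ≤ n, PathLen E m a y}

section Count
variable {V : Type*} {E : V → V → Prop} {A : Set V} {n k : ℕ} {a y : V}

lemma mem_ballS_iff_dG : y ∈ ballS E n A ↔ ∃ a ∈ A, dG E a y ≤ (n : ℝ≥0∞) := by
  constructor
  · rintro ⟨a, ha, m, hm, hp⟩
    exact ⟨a, ha, (dG_le_of_pathLen hp).trans (by exact_mod_cast Nat.cast_le.mpr hm)⟩
  · rintro ⟨a, ha, hd⟩
    obtain ⟨m, hm, hp⟩ := exists_pathLen_of_dG_le hd
    exact ⟨a, ha, m, hm, hp⟩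

lemma self_mem_ballS (hA : a ∈ A) : a ∈ ballS E n A := ⟨a, hA, 0, Nat.zero_le _, rfl⟩

lemma encard_biUnion_le {α : Type*} {A : Set α} (hA : A.Finite) {f : α → Set V} {c : ℕ∞}
    (hf : ∀ a ∈ A, (f a).encard ≤ c) : (⋃ a ∈ A, f a).encard ≤ c * A.encard := by
  revert hf
  refine Set.Finite.induction_on (motive := fun A _ => (∀ a ∈ A, (f a).encard ≤ c) →
    (⋃ a ∈ A, f a).encard ≤ c * A.encard) A hA (fun _ => by simp) ?_
  intro x A hx hAfin ih hf
  rw [Set.biUnion_insert, Set.encard_insert_of_notMem hx]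
  calc (f x ∪ ⋃ a ∈ A, f a).encard ≤ (f x).encard + (⋃ a ∈ A, f a).encard :=
        Set.encard_union_le _ _
    _ ≤ c + c * A.encard := by
        gcongr
        · exact hf x (Set.mem_insert _ _)
        · exact ih fun a ha => hf a (Set.mem_insert_of_mem _ ha)
    _ = c * (A.encard + 1) := by ring

lemma ballS_single_encard (hk : ∀ v, {w | E v w}.encard ≤ (k : ℕ∞)) (n : ℕ) (x : V) :
    (ballS E n {x}).encard ≤ (((k + 1) ^ n : ℕ) : ℕ∞) := by
  induction n generalizing x with
  | zero =>
    have hsub : ballS E 0 {x} ⊆ {x} := by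
      rintro y ⟨a, rfl, m, hm, hp⟩
      interval_cases m
      exact hp ▸ rfl
    simpa using (Set.encard_le_encard hsub).trans_eq (Set.encard_singleton x)
  | succ n ih =>
    have hsub : ballS E (n + 1) {x} ⊆ {x} ∪ ⋃ z ∈ {z | E x z}, ballS E n {z} := by
      rintro y ⟨a, rfl, m, hm, hp⟩
      match m, hp with
      | 0, hp => exact Or.inl (hp ▸ rfl)
      | m + 1, ⟨z, hz, hp⟩ =>
        exact Or.inr (Set.mem_biUnion hz ⟨z, rfl, m, by omega, hp⟩)
    have hfin : {z | E x z}.Finite := Set.finite_of_encard_le_coe (hk x)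
    calc (ballS E (n + 1) {x}).encard ≤ ({x} ∪ ⋃ z ∈ {z | E x z}, ballS E n {z}).encard :=
          Set.encard_le_encard hsub
      _ ≤ ({x} : Set V).encard + (⋃ z ∈ {z | E x z}, ballS E n {z}).encard :=
          Set.encard_union_le _ _
      _ ≤ 1 + (((k + 1) ^ n : ℕ) : ℕ∞) * (k : ℕ∞) := by
          rw [Set.encard_singleton]
          gcongr
          exact (encard_biUnion_le hfin fun z _ => ih z).trans (by gcongr; exact hk x)
      _ ≤ (((k + 1) ^ (n + 1) : ℕ) : ℕ∞) := by
          have hnat : 1 + (k + 1) ^ n * k ≤ (k + 1) ^ (n + 1) := by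
            have h1 : 1 ≤ (k + 1) ^ n := Nat.one_le_pow _ _ (by omega)
            calc 1 + (k + 1) ^ n * k ≤ (k + 1) ^ n + (k + 1) ^ n * k := by omega
              _ = (k + 1) ^ (n + 1) := by ring
          exact_mod_cast hnat

lemma ballS_eq_biUnion : ballS E n A = ⋃ a ∈ A, ballS E n {a} := by
  ext y
  constructor
  · rintro ⟨a, ha, m, hm, hp⟩
    exact Set.mem_biUnion ha ⟨a, rfl, m, hm, hp⟩
  · intro hy
    obtain ⟨a, ha, b, rfl, m, hm, hp⟩ := Set.mem_iUnion₂.mp hy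
    exact ⟨b, ha, m, hm, hp⟩

lemma ballS_encard (hk : ∀ v, {w | E v w}.encard ≤ (k : ℕ∞)) (hA : A.Finite) (n : ℕ) :
    (ballS E n A).encard ≤ (((k + 1) ^ n : ℕ) : ℕ∞) * A.encard := by
  rw [ballS_eq_biUnion]
  exact encard_biUnion_le hA fun a _ => ballS_single_encard hk n a

lemma ballS_finite (hk : ∀ v, {w | E v w}.encard ≤ (k : ℕ∞)) (hA : A.Finite) (n : ℕ) :
    (ballS E n A).Finite := by
  rw [← Set.encard_lt_top_iff]
  refine (ballS_encard hk hA n).trans_lt ?_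
  exact WithTop.mul_lt_top (WithTop.coe_lt_top _) (Set.encard_lt_top_iff.mpr hA)

end Count

section Exit
variable {V : Type*} {E : V → V → Prop} {A : Set V} {a y : V} {m R : ℕ}

lemma exists_boundary_of_path (ha : a ∈ A) (hy : y ∉ A) (hp : PathLen E m a y) :
    ∃ b, (b ∉ A ∧ ∃ c ∈ A, E c b) ∧ ∃ j, j < m ∧ PathLen E j b y := by
  induction m generalizing a with
  | zero => exact absurd ((show a = y from hp) ▸ ha) hy
  | succ m ih =>
    obtain ⟨z, hz, hp⟩ := hp
    by_cases hzA : z ∈ A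
    · obtain ⟨b, hb, j, hj, hpj⟩ := ih hzA hp
      exact ⟨b, hb, j, by omega, hpj⟩
    · exact ⟨z, ⟨hzA, a, ha, hz⟩, m, by omega, hp⟩

lemma diff_subset_ballS_boundary :
    ballS E R A \ A ⊆ ballS E R {x | x ∉ A ∧ ∃ y ∈ A, E y x} := by
  rintro y ⟨⟨a, ha, m, hm, hp⟩, hyA⟩
  obtain ⟨b, hb, j, hj, hpj⟩ := exists_boundary_of_path ha hyA hp
  exact ⟨b, hb, j, by omega, hpj⟩

end Exit

lemma transfer {V W : Type*} (EΓ : V → V → Prop) (EΔ : W → W → Prop)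
    (hΓ : BoundedOutDegree EΓ) (hΔ : BoundedOutDegree EΔ)
    (hqi : QuasiIsometric EΓ EΔ) (hiso : IsoperimetricZero EΓ) :
    IsoperimetricZero EΔ := by
  obtain ⟨kV, hkV⟩ := hΓ
  obtain ⟨kW, hkW⟩ := hΔ
  obtain ⟨l, hl, φ, hup, hlow, hsurj⟩ := hqi
  -- upper bound rephrased: dΔ(φ x, φ y) ≤ l * dΓ(x, y) + l ^ 2
  have hlow' : ∀ x y : V, dG EΔ (φ x) (φ y) ≤ (l : ℝ≥0∞) * dG EΓ x y + l * l := by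
    intro x y
    have h0 : (l : ℝ≥0∞) ≠ 0 := by exact_mod_cast hl.ne'
    have := mul_le_mul_right (hlow x y) (l : ℝ≥0∞)
    rwa [← mul_assoc, ENNReal.mul_inv_cancel h0 ENNReal.coe_ne_top, one_mul, mul_add] at this
  set L : ℕ := ⌈(l : NNReal)⌉₊ with hLdef
  have hlL : (l : ℝ≥0∞) ≤ (L : ℝ≥0∞) := by
    rw [show ((L : ℕ) : ℝ≥0∞) = ((L : NNReal) : ℝ≥0∞) by push_cast; ring]
    exact_mod_cast Nat.le_ceil l
  set R : ℕ := L * (2 * L + 1) + L with hRdef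
  set C1 : ℕ := (kV + 1) ^ L with hC1def
  set C2 : ℕ := (kW + 1) ^ L with hC2def
  set C3 : ℕ := (kV + 1) ^ R with hC3def
  have hC1pos : (0 : ℝ) < C1 := by positivity
  have hC2pos : (0 : ℝ) < C2 := by positivity
  have hC3pos : (0 : ℝ) < C3 := by positivity
  intro ε hε
  set δ : ℝ := ε / (C1 * C2 * C3) with hδdef
  have hδ : 0 < δ := div_pos hε (by positivity)
  obtain ⟨A, hAfin, hAne, hAiso⟩ := hiso δ hδ
  set FA : Set V := {x | x ∉ A ∧ ∃ y ∈ A, EΓ y x} with hFAdef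
  set B : Set W := ballS EΔ L (φ '' A) with hBdef
  set FB : Set W := {w | w ∉ B ∧ ∃ u ∈ B, EΔ u w} with hFBdef
  have hφA : φ '' A ⊆ B := fun w hw => self_mem_ballS hw
  have hBfin : B.Finite := ballS_finite hkW (hAfin.image φ) L
  have hBne : B.Nonempty := by
    obtain ⟨a, ha⟩ := hAne
    exact ⟨φ a, hφA ⟨a, ha, rfl⟩⟩
  refine ⟨B, hBfin, hBne, ?_⟩
  -- Step 1 : A.encard ≤ C1 * B.encard
  have hfiber : ∀ a : V, a ∈ A → (φ ⁻¹' {φ a}).encard ≤ ((C1 : ℕ) : ℕ∞) := by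
    intro a _
    have hsub : φ ⁻¹' {φ a} ⊆ ballS EΓ L {a} := by
      intro x hx
      have hxa : φ x = φ a := hx
      refine mem_ballS_iff_dG.mpr ⟨a, rfl, ?_⟩
      calc dG EΓ a x ≤ (l : ℝ≥0∞) * dG EΔ (φ a) (φ x) + l := hup a x
        _ = (l : ℝ≥0∞) * 0 + l := by rw [hxa, dG_self]
        _ ≤ (L : ℝ≥0∞) := by simpa using hlL
    exact (Set.encard_le_encard hsub).trans (ballS_single_encard hkV L a)
  have hAcard : A.encard ≤ ((C1 : ℕ) : ℕ∞) * B.encard := by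
    have hsub : A ⊆ ⋃ w ∈ φ '' A, φ ⁻¹' {w} := by
      intro a ha
      exact Set.mem_biUnion ⟨a, ha, rfl⟩ rfl
    calc A.encard ≤ (⋃ w ∈ φ '' A, φ ⁻¹' {w}).encard := Set.encard_le_encard hsub
      _ ≤ ((C1 : ℕ) : ℕ∞) * (φ '' A).encard := by
          refine encard_biUnion_le (hAfin.image φ) ?_
          rintro w ⟨a, ha, rfl⟩
          exact hfiber a ha
      _ ≤ ((C1 : ℕ) : ℕ∞) * B.encard := by gcongr
  -- Step 2 : FA finite
  have hFAsub : FA ⊆ ballS EΓ 1 A := by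
    rintro x ⟨hxA, y, hy, hxy⟩
    exact ⟨y, hy, 1, le_refl _, x, hxy, rfl⟩
  have hFAfin : FA.Finite := (ballS_finite hkV hAfin 1).subset hFAsub
  -- Step 3 : FB ⊆ ballS EΔ L (φ '' S) with S = ballS EΓ R A \ A
  set S : Set V := ballS EΓ R A \ A with hSdef
  have hFBsub : FB ⊆ ballS EΔ L (φ '' S) := by
    rintro w ⟨hwB, u, hu, huw⟩
    obtain ⟨fa, ⟨a, ha, rfl⟩, hau⟩ := mem_ballS_iff_dG.mp hu
    obtain ⟨x, hx1, hx2⟩ := hsurj w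
    have huw1 : dG EΔ u w ≤ 1 := by
      simpa using dG_le_of_pathLen (E := EΔ) (n := 1) ⟨w, huw, rfl⟩
    have haw : dG EΔ (φ a) w ≤ (L : ℝ≥0∞) + 1 :=
      (dG_triangle _ u _).trans (add_le_add hau huw1)
    have hax : dG EΔ (φ a) (φ x) ≤ ((2 * L + 1 : ℕ) : ℝ≥0∞) := by
      refine (dG_triangle _ w _).trans ?_
      calc dG EΔ (φ a) w + dG EΔ w (φ x) ≤ ((L : ℝ≥0∞) + 1) + L := add_le_add haw (hx2.trans hlL)
        _ = ((2 * L + 1 : ℕ) : ℝ≥0∞) := by push_cast; ring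
    have hΓax : dG EΓ a x ≤ (R : ℝ≥0∞) := by
      calc dG EΓ a x ≤ (l : ℝ≥0∞) * dG EΔ (φ a) (φ x) + l := hup a x
        _ ≤ (L : ℝ≥0∞) * ((2 * L + 1 : ℕ) : ℝ≥0∞) + L := by gcongr
        _ = (R : ℝ≥0∞) := by rw [hRdef]; push_cast; ring
    have hxA : x ∉ A := by
      intro hxA
      exact hwB (mem_ballS_iff_dG.mpr ⟨φ x, ⟨x, hxA, rfl⟩, hx1.trans hlL⟩)
    have hxS : x ∈ S := ⟨mem_ballS_iff_dG.mpr ⟨a, ha, hΓax⟩, hxA⟩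
    exact mem_ballS_iff_dG.mpr ⟨φ x, ⟨x, hxS, rfl⟩, hx1.trans hlL⟩
  -- Step 4 : counting FB
  have hSsub : S ⊆ ballS EΓ R FA := diff_subset_ballS_boundary
  have hSfin : S.Finite := (ballS_finite hkV hAfin R).subset Set.diff_subset
  have hFBcard : FB.encard ≤ ((C2 * C3 : ℕ) : ℕ∞) * FA.encard := by
    calc FB.encard ≤ (ballS EΔ L (φ '' S)).encard := Set.encard_le_encard hFBsub
      _ ≤ ((C2 : ℕ) : ℕ∞) * (φ '' S).encard := ballS_encard hkW (hSfin.image φ) L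
      _ ≤ ((C2 : ℕ) : ℕ∞) * S.encard := by gcongr; exact Set.encard_image_le _ _
      _ ≤ ((C2 : ℕ) : ℕ∞) * (ballS EΓ R FA).encard := by gcongr
      _ ≤ ((C2 : ℕ) : ℕ∞) * (((C3 : ℕ) : ℕ∞) * FA.encard) := by
          gcongr; exact ballS_encard hkV hFAfin R
      _ = ((C2 * C3 : ℕ) : ℕ∞) * FA.encard := by push_cast; ring
  -- convert to ℕ
  have hFA_enc : FA.encard = (FA.ncard : ℕ∞) := by
    rw [hFAfin.encard_eq_coe_toFinset_card, Set.ncard_eq_toFinset_card _ hFAfin]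
  have hB_enc : B.encard = (B.ncard : ℕ∞) := by
    rw [hBfin.encard_eq_coe_toFinset_card, Set.ncard_eq_toFinset_card _ hBfin]
  have hFBnat : FB.Finite ∧ FB.ncard ≤ C2 * C3 * FA.ncard := by
    rw [← Set.encard_le_coe_iff_finite_ncard_le]
    refine hFBcard.trans ?_
    rw [hFA_enc]
    push_cast
    exact le_refl _
  have hAnat : A.ncard ≤ C1 * B.ncard := by
    have h : A.encard ≤ ((C1 * B.ncard : ℕ) : ℕ∞) := by
      refine hAcard.trans_eq ?_
      rw [hB_enc]
      push_cast
      ring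
    exact (Set.encard_le_coe_iff_finite_ncard_le.mp h).2
  -- final real computation
  have hstep1 : (FB.ncard : ℝ) ≤ (C2 * C3 : ℝ) * FA.ncard := by
    exact_mod_cast hFBnat.2
  have hstep2 : (C2 * C3 : ℝ) * FA.ncard < (C2 * C3 : ℝ) * (δ * A.ncard) :=
    mul_lt_mul_of_pos_left hAiso (by positivity)
  have hAreal : (A.ncard : ℝ) ≤ (C1 : ℝ) * B.ncard := by exact_mod_cast hAnat
  have hstep3 : (C2 * C3 : ℝ) * (δ * A.ncard) ≤ (C2 * C3 : ℝ) * (δ * ((C1 : ℝ) * B.ncard)) := by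
    gcongr
  have hstep4 : (C2 * C3 : ℝ) * (δ * ((C1 : ℝ) * B.ncard)) = ε * B.ncard := by
    have h1 : (C1 : ℝ) ≠ 0 := hC1pos.ne'
    have h2 : (C2 : ℝ) ≠ 0 := hC2pos.ne'
    have h3 : (C3 : ℝ) ≠ 0 := hC3pos.ne'
    rw [hδdef]
    field_simp
  calc (FB.ncard : ℝ) ≤ (C2 * C3 : ℝ) * FA.ncard := hstep1
    _ < (C2 * C3 : ℝ) * (δ * A.ncard) := hstep2
    _ ≤ (C2 * C3 : ℝ) * (δ * ((C1 : ℝ) * B.ncard)) := hstep3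
    _ = ε * B.ncard := hstep4

lemma quasiIsometric_symm {V W : Type*} {EΓ : V → V → Prop} {EΔ : W → W → Prop}
    (h : QuasiIsometric EΓ EΔ) : QuasiIsometric EΔ EΓ := by
  classical
  obtain ⟨l, hl, φ, hup, hlow, hsurj⟩ := h
  choose ψ hψ1 hψ2 using hsurj
  set l' : NNReal := 3 * l ^ 2 + 3 * l + 1 with hl'def
  have hl'pos : 0 < l' := by positivity
  have hl'ne : (l' : ℝ≥0∞) ≠ 0 := by exact_mod_cast hl'pos.ne'
  -- dΔ(φx, φy) ≤ l dΓ(x,y) + l²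
  have hlow' : ∀ x y : V, dG EΔ (φ x) (φ y) ≤ (l : ℝ≥0∞) * dG EΓ x y + l * l := by
    intro x y
    have h0 : (l : ℝ≥0∞) ≠ 0 := by exact_mod_cast hl.ne'
    have := mul_le_mul_right (hlow x y) (l : ℝ≥0∞)
    rwa [← mul_assoc, ENNReal.mul_inv_cancel h0 ENNReal.coe_ne_top, one_mul, mul_add] at this
  -- numeric constants
  have hll' : (l : ℝ≥0∞) ≤ (l' : ℝ≥0∞) := by
    refine ENNReal.coe_le_coe.mpr ?_
    rw [← NNReal.coe_le_coe]
    push_cast [hl'def]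
    nlinarith [l.coe_nonneg]
  have hc1 : (l : ℝ≥0∞) * l + 2 * l ≤ (l' : ℝ≥0∞) := by
    rw [show (l : ℝ≥0∞) * l + 2 * l = ((l * l + 2 * l : NNReal) : ℝ≥0∞) by push_cast; ring]
    refine ENNReal.coe_le_coe.mpr ?_
    rw [← NNReal.coe_le_coe]
    push_cast [hl'def]
    nlinarith [l.coe_nonneg]
  have hc2 : 2 * (l : ℝ≥0∞) * l + l ≤ (l' : ℝ≥0∞) * l' := by
    rw [show 2 * (l : ℝ≥0∞) * l + l = ((2 * l * l + l : NNReal) : ℝ≥0∞) by push_cast; ring,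
      show (l' : ℝ≥0∞) * l' = ((l' * l' : NNReal) : ℝ≥0∞) by push_cast; ring]
    refine ENNReal.coe_le_coe.mpr ?_
    rw [← NNReal.coe_le_coe]
    push_cast [hl'def]
    nlinarith [l.coe_nonneg]
  have hc3 : (l : ℝ≥0∞) * l + l ≤ (l' : ℝ≥0∞) := by
    rw [show (l : ℝ≥0∞) * l + l = ((l * l + l : NNReal) : ℝ≥0∞) by push_cast; ring]
    refine ENNReal.coe_le_coe.mpr ?_
    rw [← NNReal.coe_le_coe]
    push_cast [hl'def]
    nlinarith [l.coe_nonneg]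
  refine ⟨l', hl'pos, ψ, ?_, ?_, ?_⟩
  · intro w w'
    calc dG EΔ w w' ≤ dG EΔ w (φ (ψ w)) + dG EΔ (φ (ψ w)) w' := dG_triangle _ _ _
      _ ≤ dG EΔ w (φ (ψ w)) + (dG EΔ (φ (ψ w)) (φ (ψ w')) + dG EΔ (φ (ψ w')) w') := by
          gcongr; exact dG_triangle _ _ _
      _ ≤ (l : ℝ≥0∞) + (((l : ℝ≥0∞) * dG EΓ (ψ w) (ψ w') + l * l) + l) :=
          add_le_add (hψ2 w) (add_le_add (hlow' _ _) (hψ1 w'))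
      _ = (l : ℝ≥0∞) * dG EΓ (ψ w) (ψ w') + ((l : ℝ≥0∞) * l + 2 * l) := by ring
      _ ≤ (l' : ℝ≥0∞) * dG EΓ (ψ w) (ψ w') + l' := by gcongr
  · intro w w'
    have key : dG EΓ (ψ w) (ψ w') ≤ (l' : ℝ≥0∞) * (dG EΔ w w' + l') := by
      calc dG EΓ (ψ w) (ψ w') ≤ (l : ℝ≥0∞) * dG EΔ (φ (ψ w)) (φ (ψ w')) + l := hup _ _
        _ ≤ (l : ℝ≥0∞) * (dG EΔ (φ (ψ w)) w + (dG EΔ w w' + dG EΔ w' (φ (ψ w')))) + l := by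
            gcongr
            exact (dG_triangle _ w _).trans (by gcongr; exact dG_triangle _ _ _)
        _ ≤ (l : ℝ≥0∞) * ((l : ℝ≥0∞) + (dG EΔ w w' + l)) + l := by
            gcongr
            · exact hψ1 w
            · exact hψ2 w'
        _ = (l : ℝ≥0∞) * dG EΔ w w' + (2 * (l : ℝ≥0∞) * l + l) := by ring
        _ ≤ (l' : ℝ≥0∞) * dG EΔ w w' + (l' : ℝ≥0∞) * l' := by gcongr
        _ = (l' : ℝ≥0∞) * (dG EΔ w w' + l') := by ring
    calc (l' : ℝ≥0∞)⁻¹ * dG EΓ (ψ w) (ψ w') ≤ (l' : ℝ≥0∞)⁻¹ * ((l' : ℝ≥0∞) * (dG EΔ w w' + l')) := by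
          gcongr
      _ = dG EΔ w w' + l' := by
          rw [← mul_assoc, ENNReal.inv_mul_cancel hl'ne ENNReal.coe_ne_top, one_mul]
  · intro x
    refine ⟨φ x, ?_, ?_⟩
    · calc dG EΓ (ψ (φ x)) x ≤ (l : ℝ≥0∞) * dG EΔ (φ (ψ (φ x))) (φ x) + l := hup _ _
        _ ≤ (l : ℝ≥0∞) * l + l := by gcongr; exact hψ1 (φ x)
        _ ≤ (l' : ℝ≥0∞) := hc3
    · calc dG EΓ x (ψ (φ x)) ≤ (l : ℝ≥0∞) * dG EΔ (φ x) (φ (ψ (φ x))) + l := hup _ _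
        _ ≤ (l : ℝ≥0∞) * l + l := by gcongr; exact hψ2 (φ x)
        _ ≤ (l' : ℝ≥0∞) := hc3

theorem isoperimetricZero_qi_invariant {V W : Type*}
    (EΓ : V → V → Prop) (EΔ : W → W → Prop)
    (hΓ : BoundedOutDegree EΓ) (hΔ : BoundedOutDegree EΔ)
    (hqi : QuasiIsometric EΓ EΔ) :
    IsoperimetricZero EΓ ↔ IsoperimetricZero EΔ :=
  ⟨transfer EΓ EΔ hΓ hΔ hqi, transfer EΔ EΓ hΔ hΓ (quasiIsometric_symm hqi)⟩
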